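/- In bond percolation on the m×n rectangle R, exactly one of the following holds: R contains an open left-right crossing, or R contains a closed dual top-bottom crossing. -/

import Mathlib

/-- The unit-square grid graph on `ℤ²` (used both for the lattice
`G_d = ℤ² + (1/2,1/2)`, whose vertex `(i,j)` sits at the physical point
`(i+1/2, j+1/2) - (1/2,1/2) = (i,j)`, and for its dual lattice, whose vertex
`(i,j)` sits at the physical point `(i-1/2, j-1/2)`). -/
def gridGraph : SimpleGraph (ℤ × ℤ) where
  Adj u v := (u.1 - v.1).natAbs + (u.2 - v.2).natAbs = 1
  symm := by constructor; intro u v h; omega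
  loopless := by constructor; intro u h; simp at h

/-- The dual edge `f` (in the dual lattice, whose vertex `(i,j)` sits at
`(i-1/2, j-1/2)`) crosses the lattice edge `e` (whose vertex `(i,j)` sits at
`(i,j)`) perpendicularly. -/
def dualCross (e f : Sym2 (ℤ × ℤ)) : Prop :=
  ∃ i j : ℤ,
    (e = s(((i, j) : ℤ × ℤ), (i + 1, j)) ∧ f = s(((i + 1, j) : ℤ × ℤ), (i + 1, j + 1))) ∨
    (e = s(((i, j) : ℤ × ℤ), (i, j + 1)) ∧ f = s(((i, j + 1) : ℤ × ℤ), (i + 1, j + 1)))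

/-- A dual edge is closed iff the unique lattice edge it crosses perpendicularly
is closed. -/
def dualClosed (ω : Sym2 (ℤ × ℤ) → Prop) (f : Sym2 (ℤ × ℤ)) : Prop :=
  ∃ e, dualCross e f ∧ ¬ ω e

/-- A left-right crossing of the rectangle `R = [0,m] × [0,n]`: a self-avoiding
path in the lattice from the left side to the right side, all of whose vertices
lie in `R`, meeting the left side only at its first vertex and the right side
only at its last vertex. -/
def isLRCrossing (m n : ℤ) {u v : ℤ × ℤ} (w : gridGraph.Walk u v) : Prop :=
  w.IsPath ∧ u.1 = 0 ∧ 0 ≤ u.2 ∧ u.2 ≤ n ∧ v.1 = m ∧ 0 ≤ v.2 ∧ v.2 ≤ n ∧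
  (∀ x ∈ w.support, 0 ≤ x.1 ∧ x.1 ≤ m ∧ 0 ≤ x.2 ∧ x.2 ≤ n) ∧
  (∀ x ∈ w.support, x.1 = 0 → x = u) ∧ (∀ x ∈ w.support, x.1 = m → x = v)

/-- A dual top-bottom crossing of `R = [0,m] × [0,n]`: a self-avoiding path in the
dual lattice (vertex `(i,j)` at physical point `(i-1/2, j-1/2)`) whose first edge
crosses the top side of `R`, whose last edge crosses the bottom side, and all of
whose intermediate vertices lie in the interior of `R`. -/
def isTBDualCrossing (m n : ℤ) {a b : ℤ × ℤ} (w : gridGraph.Walk a b) : Prop :=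
  w.IsPath ∧ a.2 = n + 1 ∧ 1 ≤ a.1 ∧ a.1 ≤ m ∧ b.2 = 0 ∧ 1 ≤ b.1 ∧ b.1 ≤ m ∧
  ∀ x ∈ w.support, x ≠ a → x ≠ b → (1 ≤ x.1 ∧ x.1 ≤ m ∧ 1 ≤ x.2 ∧ x.2 ≤ n)

attribute [local instance] Classical.propDecidable

namespace Perco

open SimpleGraph

lemma walk_of_rtg (r : ℤ×ℤ → ℤ×ℤ → Prop) (hadj : ∀ x y, r x y → gridGraph.Adj x y)
    {u x : ℤ×ℤ} (h : Relation.ReflTransGen r u x) :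
    ∃ w : gridGraph.Walk u x, (∀ y ∈ w.support, y = u ∨ ∃ z, r z y) ∧
      (∀ e ∈ w.edges, ∃ x' y', r x' y' ∧ e = s(x', y')) := by
  induction h with
  | refl => exact ⟨SimpleGraph.Walk.nil, by simp, by simp⟩
  | @tail b c hab hbc ih =>
    obtain ⟨w, hs, he⟩ := ih
    refine ⟨w.concat (hadj _ _ hbc), ?_, ?_⟩
    · intro y hy
      simp only [SimpleGraph.Walk.support_concat, List.concat_eq_append, List.mem_append, List.mem_singleton] at hy
      rcases hy with hy | hy
      · exact hs y hy
      · exact Or.inr ⟨b, by rw [hy]; exact hbc⟩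
    · intro e hee
      simp only [SimpleGraph.Walk.edges_concat, List.concat_eq_append, List.mem_append, List.mem_singleton] at hee
      rcases hee with hee | hee
      · exact he e hee
      · exact ⟨b, c, hbc, by rw [hee]⟩

lemma exists_min_crossing (startP endP inSet : ℤ×ℤ → Prop) (eok : Sym2 (ℤ×ℤ) → Prop)
    (h : ∃ (u v : ℤ×ℤ) (w : gridGraph.Walk u v), startP u ∧ endP v ∧
      (∀ x ∈ w.support, inSet x) ∧ (∀ e ∈ w.edges, eok e)) :
    ∃ (u v : ℤ×ℤ) (w : gridGraph.Walk u v), w.IsPath ∧ startP u ∧ endP v ∧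
      (∀ x ∈ w.support, inSet x) ∧ (∀ e ∈ w.edges, eok e) ∧
      (∀ x ∈ w.support, startP x → x = u) ∧ (∀ x ∈ w.support, endP x → x = v) := by
  classical
  set Pk : ℕ → Prop := fun k => ∃ (u v : ℤ×ℤ) (w : gridGraph.Walk u v), (startP u ∧ endP v ∧
      (∀ x ∈ w.support, inSet x) ∧ (∀ e ∈ w.edges, eok e)) ∧ w.length = k with hPk
  have hex : ∃ k, Pk k := by
    obtain ⟨u, v, w, h1, h2, h3, h4⟩ := h
    exact ⟨w.length, u, v, w, ⟨h1, h2, h3, h4⟩, rfl⟩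
  obtain ⟨u, v, w, ⟨h1, h2, h3, h4⟩, hlen⟩ := Nat.find_spec hex
  have hmin := fun j (hj : j < Nat.find hex) => Nat.find_min hex hj
  -- replace by bypass
  refine ⟨u, v, w.bypass, w.bypass_isPath, h1, h2,
    fun x hx => h3 x (w.support_bypass_subset hx),
    fun e he => h4 e (w.edges_bypass_subset he), ?_, ?_⟩
  · intro x hx hsx
    by_contra hxu
    have hx' : x ∈ w.bypass.support := hx
    have hdrop : (w.bypass.dropUntil x hx').length < Nat.find hex := by
      have hspec := congr_arg SimpleGraph.Walk.length (w.bypass.take_spec hx')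
      rw [SimpleGraph.Walk.length_append] at hspec
      have htk : 0 < (w.bypass.takeUntil x hx').length := by
        rcases Nat.eq_zero_or_pos (w.bypass.takeUntil x hx').length with h0 | h0
        · exact absurd (SimpleGraph.Walk.eq_of_length_eq_zero h0).symm hxu
        · exact h0
      have : w.bypass.length ≤ w.length := w.length_bypass_le
      omega
    exact hmin _ hdrop ⟨x, v, w.bypass.dropUntil x hx', ⟨hsx, h2,
      fun y hy => h3 y (w.support_bypass_subset ((SimpleGraph.Walk.support_dropUntil_subset _ hx') hy)),
      fun e he => h4 e (w.edges_bypass_subset ((SimpleGraph.Walk.edges_dropUntil_subset _ hx') he))⟩, rfl⟩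
  · intro x hx hex'
    by_contra hxv
    have hx' : x ∈ w.bypass.support := hx
    have htake : (w.bypass.takeUntil x hx').length < Nat.find hex := by
      have hspec := congr_arg SimpleGraph.Walk.length (w.bypass.take_spec hx')
      rw [SimpleGraph.Walk.length_append] at hspec
      have hdp : 0 < (w.bypass.dropUntil x hx').length := by
        rcases Nat.eq_zero_or_pos (w.bypass.dropUntil x hx').length with h0 | h0
        · exact absurd (SimpleGraph.Walk.eq_of_length_eq_zero h0) hxv
        · exact h0
      have : w.bypass.length ≤ w.length := w.length_bypass_le
      omega
    exact hmin _ htake ⟨u, x, w.bypass.takeUntil x hx', ⟨h1, hex',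
      fun y hy => h3 y (w.support_bypass_subset ((SimpleGraph.Walk.support_takeUntil_subset _ hx') hy)),
      fun e he => h4 e (w.edges_bypass_subset ((SimpleGraph.Walk.edges_takeUntil_subset _ hx') he))⟩, rfl⟩

end Perco

namespace Perco
open SimpleGraph

/-- vertical dual step spanning levels `j, j+1` in column `≤ i0` -/
def vertB (j i0 : ℤ) (d d' : ℤ×ℤ) : Prop :=
  d.1 = d'.1 ∧ d.1 ≤ i0 ∧ ((d.2 = j ∧ d'.2 = j + 1) ∨ (d'.2 = j ∧ d.2 = j + 1))

/-- the step traverses the given ordered pair, in either direction -/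
def PM (c c' d d' : ℤ×ℤ) : Prop := (d = c ∧ d' = c') ∨ (d = c' ∧ d' = c)

noncomputable def dcount (P : ℤ×ℤ → ℤ×ℤ → Prop) {a b : ℤ×ℤ} (p : gridGraph.Walk a b) : ℕ :=
  p.darts.countP fun dr => decide (P dr.fst dr.snd)

noncomputable def cnt (x : ℤ×ℤ) {a b : ℤ×ℤ} (p : gridGraph.Walk a b) : ℕ :=
  dcount (vertB x.2 x.1) p

lemma dcount_nil {P : ℤ×ℤ → ℤ×ℤ → Prop} {a : ℤ×ℤ} :
    dcount P (SimpleGraph.Walk.nil : gridGraph.Walk a a) = 0 := rfl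

lemma dcount_cons {P : ℤ×ℤ → ℤ×ℤ → Prop} {a c b : ℤ×ℤ} (h : gridGraph.Adj a c)
    (p : gridGraph.Walk c b) :
    dcount P (SimpleGraph.Walk.cons h p) = (if P a c then 1 else 0) + dcount P p := by
  simp only [dcount, SimpleGraph.Walk.darts_cons, List.countP_cons]
  by_cases hP : P a c <;> simp [hP] <;> omega

lemma dcount_eq_zero {P : ℤ×ℤ → ℤ×ℤ → Prop} {a b : ℤ×ℤ} (p : gridGraph.Walk a b)
    (h : ∀ dr ∈ p.darts, ¬ P dr.fst dr.snd) : dcount P p = 0 := by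
  apply List.countP_eq_zero.2
  intro dr hdr
  simpa using h dr hdr

lemma dcount_exists {P : ℤ×ℤ → ℤ×ℤ → Prop} {a b : ℤ×ℤ} {p : gridGraph.Walk a b}
    (h : dcount P p ≠ 0) : ∃ dr ∈ p.darts, P dr.fst dr.snd := by
  have := List.countP_pos_iff (p := fun dr => decide (P dr.fst dr.snd)) (l := p.darts) |>.1
    (Nat.pos_of_ne_zero h)
  simpa using this

lemma dcount_congr {P Q : ℤ×ℤ → ℤ×ℤ → Prop} {a b : ℤ×ℤ} (p : gridGraph.Walk a b)
    (h : ∀ x y, P x y ↔ Q x y) : dcount P p = dcount Q p := by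
  induction p with
  | nil => rfl
  | cons h' p ih => rw [dcount_cons, dcount_cons, ih]; simp [h _ _]

lemma dcount_or {P Q : ℤ×ℤ → ℤ×ℤ → Prop} {a b : ℤ×ℤ} (p : gridGraph.Walk a b)
    (h : ∀ x y, ¬ (P x y ∧ Q x y)) :
    dcount (fun x y => P x y ∨ Q x y) p = dcount P p + dcount Q p := by
  induction p with
  | nil => rfl
  | @cons x y b h' p ih =>
    rw [dcount_cons, dcount_cons, dcount_cons, ih]
    by_cases h1 : P x y <;> by_cases h2 : Q x y <;> simp [h1, h2] <;>
      first | omega | exact absurd ⟨h1, h2⟩ (h _ _)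

lemma dcount_parity {a b : ℤ×ℤ} (p : gridGraph.Walk a b) (q : ℤ×ℤ → Prop)
    (P : ℤ×ℤ → ℤ×ℤ → Prop)
    (h : ∀ x y, gridGraph.Adj x y → x ∈ p.support → y ∈ p.support →
      (P x y ↔ ¬(q x ↔ q y))) :
    dcount P p % 2 = (if q a ↔ q b then 0 else 1) % 2 := by
  induction p with
  | nil => simp [dcount_nil]
  | @cons a c b h' p ih =>
    rw [dcount_cons]
    have hmem : ∀ y ∈ p.support, y ∈ (SimpleGraph.Walk.cons h' p).support := by
      intro y hy; rw [SimpleGraph.Walk.support_cons]; exact List.mem_cons_of_mem _ hy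
    have hiff := h a c h' ((SimpleGraph.Walk.cons h' p).start_mem_support)
      (hmem c p.start_mem_support)
    have ihh := ih (fun x y hxy hx hy => h x y hxy (hmem x hx) (hmem y hy))
    by_cases hqa : q a <;> by_cases hqc : q c <;> by_cases hqb : q b <;>
      by_cases hP : P a c <;>
      simp only [hqa, hqc, hqb, hP, if_true, if_false, iff_true, iff_false, not_true, not_false_iff,
        iff_self, not_not] at hiff ihh ⊢ <;> omega

end Perco

namespace Perco
open SimpleGraph

lemma dualCross_horiz (i j : ℤ) :
    dualCross s(((i,j) : ℤ×ℤ),(i+1,j)) s(((i+1,j) : ℤ×ℤ),(i+1,j+1)) := ⟨i, j, Or.inl ⟨rfl, rfl⟩⟩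

lemma dualCross_vert (i j : ℤ) :
    dualCross s(((i,j) : ℤ×ℤ),(i,j+1)) s(((i,j+1) : ℤ×ℤ),(i+1,j+1)) := ⟨i, j, Or.inr ⟨rfl, rfl⟩⟩

lemma dualCross_unique {e e' f : Sym2 (ℤ×ℤ)} (h : dualCross e f) (h' : dualCross e' f) :
    e = e' := by
  obtain ⟨i, j, hc⟩ := h
  obtain ⟨i', j', hc'⟩ := h'
  rcases hc with ⟨he, hf⟩ | ⟨he, hf⟩ <;> rcases hc' with ⟨he', hf'⟩ | ⟨he', hf'⟩ <;>
    subst he <;> subst he' <;>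
    have heq := hf.symm.trans hf' <;>
    rw [Sym2.eq_iff] at heq <;>
    simp only [Prod.mk.injEq] at heq
  · obtain ⟨hi, hj⟩ : i = i' ∧ j = j' := by omega
    subst hi; subst hj; rfl
  · exact absurd heq (by omega)
  · exact absurd heq (by omega)
  · obtain ⟨hi, hj⟩ : i = i' ∧ j = j' := by omega
    subst hi; subst hj; rfl

end Perco

namespace Perco
open SimpleGraph

lemma PM_mem_edges {c c' a b : ℤ×ℤ} {p : gridGraph.Walk a b}
    (h : dcount (PM c c') p ≠ 0) : s(c, c') ∈ p.edges := by
  obtain ⟨dr, hdr, hPM⟩ := dcount_exists h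
  have hedge : dr.edge = s(c, c') := by
    rcases hPM with ⟨h1, h2⟩ | ⟨h1, h2⟩
    · show s(dr.fst, dr.snd) = s(c, c'); rw [h1, h2]
    · show s(dr.fst, dr.snd) = s(c, c'); rw [h1, h2, Sym2.eq_swap]
  rw [← hedge]
  exact List.mem_map_of_mem (f := Dart.edge) hdr

/-- If the crossing dual edge is closed-dual on the walk, the primal edge is not open. -/
lemma closed_of_mem {ω : Sym2 (ℤ×ℤ) → Prop} {a b : ℤ×ℤ} {p : gridGraph.Walk a b}
    (hcl : ∀ f ∈ p.edges, dualClosed ω f) {e f : Sym2 (ℤ×ℤ)}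
    (hmem : f ∈ p.edges) (hx : dualCross e f) : ¬ ω e := by
  obtain ⟨e', he', hne'⟩ := hcl f hmem
  rwa [dualCross_unique hx he']

/-- horizontal primal edge: parities agree -/
lemma cnt_horiz {ω : Sym2 (ℤ×ℤ) → Prop} {a b : ℤ×ℤ} {p : gridGraph.Walk a b}
    (hcl : ∀ f ∈ p.edges, dualClosed ω f) (i0 j : ℤ)
    (hopen : ω s(((i0,j) : ℤ×ℤ), (i0+1,j))) :
    cnt ((i0,j) : ℤ×ℤ) p % 2 = cnt ((i0+1,j) : ℤ×ℤ) p % 2 := by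
  have hsplit : cnt ((i0+1,j) : ℤ×ℤ) p
      = cnt ((i0,j) : ℤ×ℤ) p + dcount (PM (i0+1,j) (i0+1,j+1)) p := by
    rw [cnt, cnt]
    have h1 : dcount (vertB j (i0+1)) p
        = dcount (fun x y => vertB j i0 x y ∨ PM (i0+1,j) (i0+1,j+1) x y) p := by
      apply dcount_congr
      intro x y
      simp only [vertB, PM, Prod.ext_iff]
      constructor
      · rintro ⟨h1, h2, h3⟩
        rcases lt_or_eq_of_le h2 with h4 | h4
        · exact Or.inl ⟨h1, by omega, h3⟩
        · right; rcases h3 with ⟨ha, hb⟩ | ⟨ha, hb⟩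
          · exact Or.inl ⟨⟨by omega, by omega⟩, by omega, by omega⟩
          · exact Or.inr ⟨⟨by omega, by omega⟩, by omega, by omega⟩
      · rintro (⟨h1, h2, h3⟩ | ⟨⟨h1, h2⟩, h3, h4⟩ | ⟨⟨h1, h2⟩, h3, h4⟩) <;>
          refine ⟨by omega, by omega, ?_⟩
        · exact h3
        · left; omega
        · right; omega
    rw [h1, dcount_or]
    intro x y
    simp only [vertB, PM, Prod.ext_iff]
    omega
  by_contra hne
  have hodd : dcount (PM (i0+1,j) (i0+1,j+1)) p ≠ 0 := by
    intro h0; rw [h0] at hsplit; omega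
  exact closed_of_mem hcl (PM_mem_edges hodd) (dualCross_horiz i0 j) hopen

/-- vertical primal edge: parities agree -/
lemma cnt_vert {ω : Sym2 (ℤ×ℤ) → Prop} {m n : ℤ} {a b : ℤ×ℤ} {p : gridGraph.Walk a b}
    (hcl : ∀ f ∈ p.edges, dualClosed ω f) (ha2 : a.2 = n + 1) (hb2 : b.2 = 0)
    (i j0 : ℤ) (hj0 : 0 ≤ j0) (hj1 : j0 + 1 ≤ n)
    (hopen : ω s(((i,j0) : ℤ×ℤ), (i,j0+1))) :
    cnt ((i,j0) : ℤ×ℤ) p % 2 = cnt ((i,j0+1) : ℤ×ℤ) p % 2 := by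
  set P : ℤ×ℤ → ℤ×ℤ → Prop := fun d d' =>
    (vertB j0 i d d' ∨ vertB (j0+1) i d d') ∨ PM (i,j0+1) (i+1,j0+1) d d' with hP
  have hpar := dcount_parity p (fun d => d.2 = j0 + 1 ∧ d.1 ≤ i) P ?_
  · have hsplit : dcount P p = (cnt ((i,j0) : ℤ×ℤ) p + cnt ((i,j0+1) : ℤ×ℤ) p)
        + dcount (PM (i,j0+1) (i+1,j0+1)) p := by
      rw [hP, dcount_or, dcount_or]
      · rfl
      · intro x y; simp only [vertB, Prod.ext_iff]; omega
      · intro x y; simp only [vertB, PM, Prod.ext_iff]; omega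
    have hiff : ((a.2 = j0 + 1 ∧ a.1 ≤ i) ↔ (b.2 = j0 + 1 ∧ b.1 ≤ i)) := by
      constructor
      · rintro ⟨h1, -⟩; omega
      · rintro ⟨h1, -⟩; omega
    rw [if_pos hiff] at hpar
    by_contra hne
    have hodd : dcount (PM (i,j0+1) (i+1,j0+1)) p ≠ 0 := by
      intro h0
      rw [hsplit, h0] at hpar
      omega
    exact closed_of_mem hcl (PM_mem_edges hodd) (dualCross_vert i j0) hopen
  · intro x y hadj _ _
    have hadj' : (x.1 - y.1).natAbs + (x.2 - y.2).natAbs = 1 := hadj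
    simp only [hP, vertB, PM, Prod.ext_iff]
    constructor
    · rintro ((⟨h1, h2, h3 | h3⟩ | ⟨h1, h2, h3 | h3⟩) | ⟨h3, h4⟩ | ⟨h3, h4⟩) <;> omega
    · intro hq
      by_cases hx2 : x.2 = j0 + 1 ∧ x.1 ≤ i <;> by_cases hy2 : y.2 = j0 + 1 ∧ y.1 ≤ i
      · exact absurd (iff_of_true hx2 hy2) hq
      · -- x in set, y not
        by_cases hxy : x.1 = y.1
        · -- vertical step
          left
          rcases (by omega : y.2 = j0 ∨ y.2 = j0 + 2) with h | h
          · exact Or.inl ⟨hxy, by omega, Or.inr ⟨by omega, by omega⟩⟩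
          · exact Or.inr ⟨hxy, by omega, Or.inl ⟨by omega, by omega⟩⟩
        · right
          left
          constructor <;> [skip; skip] <;> constructor <;> omega
      · by_cases hxy : x.1 = y.1
        · left
          rcases (by omega : x.2 = j0 ∨ x.2 = j0 + 2) with h | h
          · exact Or.inl ⟨hxy, by omega, Or.inl ⟨by omega, by omega⟩⟩
          · exact Or.inr ⟨hxy, by omega, Or.inr ⟨by omega, by omega⟩⟩
        · right
          right
          constructor <;> [skip; skip] <;> constructor <;> omega
      · exact absurd (iff_of_false hx2 hy2) hq

end Perco

namespace Perco
open SimpleGraph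

def inR (m n : ℤ) (x : ℤ×ℤ) : Prop := 0 ≤ x.1 ∧ x.1 ≤ m ∧ 0 ≤ x.2 ∧ x.2 ≤ n

lemma cnt_key {m n : ℤ} {a b : ℤ×ℤ} {p : gridGraph.Walk a b} (ω : Sym2 (ℤ×ℤ) → Prop)
    (step : ∀ x y : ℤ×ℤ, gridGraph.Adj x y → inR m n x → inR m n y → ω s(x,y) →
      cnt x p % 2 = cnt y p % 2) :
    ∀ (u' v' : ℤ×ℤ) (w' : gridGraph.Walk u' v'), (∀ x ∈ w'.support, inR m n x) →
      (∀ e ∈ w'.edges, ω e) → cnt u' p % 2 = cnt v' p % 2 := by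
  intro u' v' w'
  induction w' with
  | nil => intro _ _; rfl
  | @cons x c v h' q ih =>
    intro hs he
    have h1 : cnt x p % 2 = cnt c p % 2 := by
      apply step x c h'
      · exact hs x (by simp)
      · exact hs c (by simp [SimpleGraph.Walk.support_cons, q.start_mem_support])
      · exact he _ (by simp)
    rw [h1]
    exact ih (fun z hz => hs z (by simp [SimpleGraph.Walk.support_cons, hz]))
      (fun e hee => he e (by simp [SimpleGraph.Walk.edges_cons, hee]))

lemma part1 {m n : ℤ} (hn : 2 ≤ n) (ω : Sym2 (ℤ×ℤ) → Prop)
    {u v : ℤ×ℤ} {w : gridGraph.Walk u v} (hLR : isLRCrossing m n w)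
    (hopen : ∀ e ∈ w.edges, ω e)
    {a b : ℤ×ℤ} {p : gridGraph.Walk a b} (hTB : isTBDualCrossing m n p)
    (hcl : ∀ f ∈ p.edges, dualClosed ω f) : False := by
  obtain ⟨hpp, ha2, ha1l, ha1r, hb2, hb1l, hb1r, hint⟩ := hTB
  obtain ⟨hwp, hu1, hu2l, hu2r, hv1, hv2l, hv2r, hR, hL0, hRm⟩ := hLR
  have hbound : ∀ d ∈ p.support, 1 ≤ d.1 ∧ d.1 ≤ m := by
    intro d hd
    by_cases hda : d = a
    · subst hda; exact ⟨ha1l, ha1r⟩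
    by_cases hdb : d = b
    · subst hdb; exact ⟨hb1l, hb1r⟩
    exact ⟨(hint d hd hda hdb).1, (hint d hd hda hdb).2.1⟩
  have step : ∀ x y : ℤ×ℤ, gridGraph.Adj x y → inR m n x → inR m n y → ω s(x,y) →
      cnt x p % 2 = cnt y p % 2 := by
    intro x y hadj hx hy hω
    have hadj' : (x.1 - y.1).natAbs + (x.2 - y.2).natAbs = 1 := hadj
    by_cases hxy : x.1 = y.1
    · rcases (by omega : y.2 = x.2 + 1 ∨ x.2 = y.2 + 1) with h | h
      · have hyx : y = (x.1, x.2 + 1) := by rw [Prod.ext_iff]; exact ⟨hxy.symm, h⟩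
        subst hyx
        exact cnt_vert (m := m) hcl ha2 hb2 x.1 x.2 hx.2.2.1 hy.2.2.2 hω
      · have hyx : x = (y.1, y.2 + 1) := by rw [Prod.ext_iff]; exact ⟨hxy, h⟩
        subst hyx
        exact (cnt_vert (m := m) hcl ha2 hb2 y.1 y.2 hy.2.2.1 hx.2.2.2
          (by rwa [Sym2.eq_swap])).symm
    · rcases (by omega : y.1 = x.1 + 1 ∨ x.1 = y.1 + 1) with h | h
      · have hyx : y = (x.1 + 1, x.2) := by rw [Prod.ext_iff]; refine ⟨h, by omega⟩
        subst hyx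
        exact cnt_horiz hcl x.1 x.2 hω
      · have hyx : x = (y.1 + 1, y.2) := by rw [Prod.ext_iff]; refine ⟨h, by omega⟩
        subst hyx
        exact (cnt_horiz hcl y.1 y.2 (by rwa [Sym2.eq_swap])).symm
  have key := cnt_key ω step
  have hu0 : cnt u p = 0 := by
    apply dcount_eq_zero
    intro dr hdr
    have h1 := hbound dr.fst (SimpleGraph.Walk.dart_fst_mem_support_of_mem_darts p hdr)
    intro hv
    have := hv.2.1
    omega
  have hvodd : cnt v p % 2 = 1 := by
    have hpar := dcount_parity p (fun d => v.2 < d.2) (vertB v.2 v.1) ?_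
    · rw [cnt, hpar, if_neg]
      intro hiff
      have := hiff.1 (by omega : v.2 < a.2)
      omega
    · intro x y hadj hx hy
      have hadj' : (x.1 - y.1).natAbs + (x.2 - y.2).natAbs = 1 := hadj
      have hbx := hbound x hx
      have hby := hbound y hy
      simp only [vertB, hv1]
      constructor
      · rintro ⟨h1, h2, h3 | h3⟩ <;> (intro hif; omega)
      · intro hq
        by_cases hxy : x.1 = y.1
        · refine ⟨hxy, by omega, ?_⟩
          by_cases hc : v.2 < x.2
          · right; constructor <;> omega
          · left; constructor <;> omega
        · exfalso
          have : x.2 = y.2 := by omega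
          exact hq (by omega)
  have := key u v w (fun x hx => (by
      obtain ⟨c1, c2, c3, c4⟩ := hR x hx
      exact ⟨c1, c2, c3, c4⟩)) hopen
  rw [hu0] at this
  rw [← this] at hvodd
  simp at hvodd

end Perco

namespace Perco
open SimpleGraph

lemma grid_adj_iff (x y : ℤ×ℤ) :
    gridGraph.Adj x y ↔ (x.1 - y.1).natAbs + (x.2 - y.2).natAbs = 1 := Iff.rfl

def inStrip (m n : ℤ) (d : ℤ×ℤ) : Prop := 1 ≤ d.1 ∧ d.1 ≤ m ∧ 0 ≤ d.2 ∧ d.2 ≤ n + 1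

def openStep (ω : Sym2 (ℤ×ℤ) → Prop) (m n : ℤ) (x y : ℤ×ℤ) : Prop :=
  inR m n x ∧ inR m n y ∧ gridGraph.Adj x y ∧ ω s(x,y)

def Sset (ω : Sym2 (ℤ×ℤ) → Prop) (m n : ℤ) (x : ℤ×ℤ) : Prop :=
  ∃ u : ℤ×ℤ, u.1 = 0 ∧ inR m n u ∧ Relation.ReflTransGen (openStep ω m n) u x

lemma Sset_left {ω : Sym2 (ℤ×ℤ) → Prop} {m n : ℤ} {x : ℤ×ℤ} (h0 : x.1 = 0)
    (hR : inR m n x) : Sset ω m n x := ⟨x, h0, hR, Relation.ReflTransGen.refl⟩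

lemma Sset_step {ω : Sym2 (ℤ×ℤ) → Prop} {m n : ℤ} {x y : ℤ×ℤ} (h : Sset ω m n x)
    (hs : openStep ω m n x y) : Sset ω m n y := by
  obtain ⟨u, h1, h2, h3⟩ := h
  exact ⟨u, h1, h2, h3.tail hs⟩

lemma not_open_of_sep {ω : Sym2 (ℤ×ℤ) → Prop} {m n : ℤ} {x y : ℤ×ℤ}
    (hS : Sset ω m n x) (hnS : ¬ Sset ω m n y) (hx : inR m n x) (hy : inR m n y)
    (hadj : gridGraph.Adj x y) : ¬ ω s(x,y) :=
  fun hω => hnS (Sset_step hS ⟨hx, hy, hadj, hω⟩)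

/-- The directed interface step on the dual lattice. -/
def Dstep (ω : Sym2 (ℤ×ℤ) → Prop) (m n : ℤ) (d d' : ℤ×ℤ) : Prop :=
  inStrip m n d ∧ inStrip m n d' ∧ ∃ i j : ℤ,
    ((d = (i,j) ∧ d' = (i,j+1)) ∧ inR m n (i-1,j) ∧ inR m n (i,j) ∧
      Sset ω m n (i-1,j) ∧ ¬ Sset ω m n (i,j)) ∨
    ((d = (i,j+1) ∧ d' = (i,j)) ∧ inR m n (i-1,j) ∧ inR m n (i,j) ∧
      Sset ω m n (i,j) ∧ ¬ Sset ω m n (i-1,j)) ∨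
    ((d = (i,j) ∧ d' = (i+1,j)) ∧ inR m n (i,j-1) ∧ inR m n (i,j) ∧
      Sset ω m n (i,j) ∧ ¬ Sset ω m n (i,j-1)) ∨
    ((d = (i+1,j) ∧ d' = (i,j)) ∧ inR m n (i,j-1) ∧ inR m n (i,j) ∧
      Sset ω m n (i,j-1) ∧ ¬ Sset ω m n (i,j))

lemma grid_adj_right (i j : ℤ) : gridGraph.Adj (i,j) (i+1,j) := by
  show ((i:ℤ) - (i+1)).natAbs + (j - j).natAbs = 1; omega

lemma grid_adj_up (i j : ℤ) : gridGraph.Adj (i,j) (i,j+1) := by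
  show ((i:ℤ) - i).natAbs + (j - (j+1)).natAbs = 1; omega

lemma Dstep_adj {ω : Sym2 (ℤ×ℤ) → Prop} {m n : ℤ} {d d' : ℤ×ℤ} (h : Dstep ω m n d d') :
    gridGraph.Adj d d' := by
  obtain ⟨-, -, i, j, hc⟩ := h
  rcases hc with ⟨⟨h1, h2⟩, -⟩ | ⟨⟨h1, h2⟩, -⟩ | ⟨⟨h1, h2⟩, -⟩ | ⟨⟨h1, h2⟩, -⟩ <;>
    subst h1 <;> subst h2
  · exact grid_adj_up i j
  · exact (grid_adj_up i j).symm
  · exact grid_adj_right i j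
  · exact (grid_adj_right i j).symm

lemma Dstep_strip₁ {ω : Sym2 (ℤ×ℤ) → Prop} {m n : ℤ} {d d' : ℤ×ℤ} (h : Dstep ω m n d d') :
    inStrip m n d := h.1

lemma Dstep_strip₂ {ω : Sym2 (ℤ×ℤ) → Prop} {m n : ℤ} {d d' : ℤ×ℤ} (h : Dstep ω m n d d') :
    inStrip m n d' := h.2.1

lemma Dstep_closed {ω : Sym2 (ℤ×ℤ) → Prop} {m n : ℤ} {d d' : ℤ×ℤ} (h : Dstep ω m n d d') :
    dualClosed ω s(d,d') := by
  obtain ⟨-, -, i, j, hc⟩ := h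
  have hii : i - 1 + 1 = i := by omega
  rcases hc with ⟨⟨h1, h2⟩, hA, hB, hS1, hS2⟩ | ⟨⟨h1, h2⟩, hA, hB, hS1, hS2⟩ |
    ⟨⟨h1, h2⟩, hA, hB, hS1, hS2⟩ | ⟨⟨h1, h2⟩, hA, hB, hS1, hS2⟩ <;> subst h1 <;> subst h2
  · -- up-traverse : crosses s((i-1,j),(i,j)), S on (i-1,j)
    have hcr := dualCross_horiz (i-1) j
    rw [hii] at hcr
    have hadj : gridGraph.Adj ((i-1,j) : ℤ×ℤ) (i,j) := by
      have := grid_adj_right (i-1) j; rwa [hii] at this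
    exact ⟨_, hcr, not_open_of_sep hS1 hS2 hA hB hadj⟩
  · -- down-traverse : same crossed edge, S on (i,j)
    have hcr := dualCross_horiz (i-1) j
    rw [hii] at hcr
    rw [Sym2.eq_swap]
    have hadj : gridGraph.Adj ((i,j) : ℤ×ℤ) (i-1,j) := by
      have := (grid_adj_right (i-1) j).symm; rwa [hii] at this
    refine ⟨_, hcr, ?_⟩
    rw [Sym2.eq_swap]
    exact not_open_of_sep hS1 hS2 hB hA hadj
  · -- right-traverse : crosses s((i,j-1),(i,j)), S on (i,j)
    have hjj : j - 1 + 1 = j := by omega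
    have hcr := dualCross_vert i (j-1)
    rw [hjj] at hcr
    have hadj : gridGraph.Adj ((i,j) : ℤ×ℤ) (i,j-1) := by
      have := (grid_adj_up i (j-1)).symm; rwa [hjj] at this
    refine ⟨_, hcr, ?_⟩
    rw [Sym2.eq_swap]
    exact not_open_of_sep hS1 hS2 hB hA hadj
  · -- left-traverse : crosses s((i,j-1),(i,j)), S on (i,j-1)
    have hjj : j - 1 + 1 = j := by omega
    have hcr := dualCross_vert i (j-1)
    rw [hjj] at hcr
    rw [Sym2.eq_swap]
    have hadj : gridGraph.Adj ((i,j-1) : ℤ×ℤ) (i,j) := by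
      have := grid_adj_up i (j-1); rwa [hjj] at this
    exact ⟨_, hcr, not_open_of_sep hS1 hS2 hA hB hadj⟩

end Perco

namespace Perco
open SimpleGraph

variable (ω : Sym2 (ℤ×ℤ) → Prop) (m n : ℤ)

lemma Dstep_up (i j : ℤ) : Dstep ω m n (i,j) (i,j+1) ↔
    (inStrip m n (i,j) ∧ inStrip m n (i,j+1) ∧ inR m n (i-1,j) ∧ inR m n (i,j) ∧
      Sset ω m n (i-1,j) ∧ ¬ Sset ω m n (i,j)) := by
  constructor
  · rintro ⟨h1, h2, i', j', hc⟩
    rcases hc with ⟨⟨hd, hd'⟩, hA, hB, hS1, hS2⟩ | ⟨⟨hd, hd'⟩, hA, hB, hS1, hS2⟩ |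
      ⟨⟨hd, hd'⟩, hA, hB, hS1, hS2⟩ | ⟨⟨hd, hd'⟩, hA, hB, hS1, hS2⟩ <;>
      simp only [Prod.mk.injEq] at hd hd'
    · obtain ⟨rfl, rfl⟩ : i' = i ∧ j' = j := by omega
      exact ⟨h1, h2, hA, hB, hS1, hS2⟩
    · omega
    · omega
    · omega
  · rintro ⟨h1, h2, h3, h4, h5, h6⟩
    exact ⟨h1, h2, i, j, Or.inl ⟨⟨rfl, rfl⟩, h3, h4, h5, h6⟩⟩

lemma Dstep_down (i j : ℤ) : Dstep ω m n (i,j+1) (i,j) ↔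
    (inStrip m n (i,j+1) ∧ inStrip m n (i,j) ∧ inR m n (i-1,j) ∧ inR m n (i,j) ∧
      Sset ω m n (i,j) ∧ ¬ Sset ω m n (i-1,j)) := by
  constructor
  · rintro ⟨h1, h2, i', j', hc⟩
    rcases hc with ⟨⟨hd, hd'⟩, hA, hB, hS1, hS2⟩ | ⟨⟨hd, hd'⟩, hA, hB, hS1, hS2⟩ |
      ⟨⟨hd, hd'⟩, hA, hB, hS1, hS2⟩ | ⟨⟨hd, hd'⟩, hA, hB, hS1, hS2⟩ <;>
      simp only [Prod.mk.injEq] at hd hd'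
    · omega
    · obtain ⟨rfl, rfl⟩ : i' = i ∧ j' = j := by omega
      exact ⟨h1, h2, hA, hB, hS1, hS2⟩
    · omega
    · omega
  · rintro ⟨h1, h2, h3, h4, h5, h6⟩
    exact ⟨h1, h2, i, j, Or.inr (Or.inl ⟨⟨rfl, rfl⟩, h3, h4, h5, h6⟩)⟩

lemma Dstep_right (i j : ℤ) : Dstep ω m n (i,j) (i+1,j) ↔
    (inStrip m n (i,j) ∧ inStrip m n (i+1,j) ∧ inR m n (i,j-1) ∧ inR m n (i,j) ∧
      Sset ω m n (i,j) ∧ ¬ Sset ω m n (i,j-1)) := by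
  constructor
  · rintro ⟨h1, h2, i', j', hc⟩
    rcases hc with ⟨⟨hd, hd'⟩, hA, hB, hS1, hS2⟩ | ⟨⟨hd, hd'⟩, hA, hB, hS1, hS2⟩ |
      ⟨⟨hd, hd'⟩, hA, hB, hS1, hS2⟩ | ⟨⟨hd, hd'⟩, hA, hB, hS1, hS2⟩ <;>
      simp only [Prod.mk.injEq] at hd hd'
    · omega
    · omega
    · obtain ⟨rfl, rfl⟩ : i' = i ∧ j' = j := by omega
      exact ⟨h1, h2, hA, hB, hS1, hS2⟩
    · omega
  · rintro ⟨h1, h2, h3, h4, h5, h6⟩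
    exact ⟨h1, h2, i, j, Or.inr (Or.inr (Or.inl ⟨⟨rfl, rfl⟩, h3, h4, h5, h6⟩))⟩

lemma Dstep_left (i j : ℤ) : Dstep ω m n (i+1,j) (i,j) ↔
    (inStrip m n (i+1,j) ∧ inStrip m n (i,j) ∧ inR m n (i,j-1) ∧ inR m n (i,j) ∧
      Sset ω m n (i,j-1) ∧ ¬ Sset ω m n (i,j)) := by
  constructor
  · rintro ⟨h1, h2, i', j', hc⟩
    rcases hc with ⟨⟨hd, hd'⟩, hA, hB, hS1, hS2⟩ | ⟨⟨hd, hd'⟩, hA, hB, hS1, hS2⟩ |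
      ⟨⟨hd, hd'⟩, hA, hB, hS1, hS2⟩ | ⟨⟨hd, hd'⟩, hA, hB, hS1, hS2⟩ <;>
      simp only [Prod.mk.injEq] at hd hd'
    · omega
    · omega
    · omega
    · obtain ⟨rfl, rfl⟩ : i' = i ∧ j' = j := by omega
      exact ⟨h1, h2, hA, hB, hS1, hS2⟩
  · rintro ⟨h1, h2, h3, h4, h5, h6⟩
    exact ⟨h1, h2, i, j, Or.inr (Or.inr (Or.inr ⟨⟨rfl, rfl⟩, h3, h4, h5, h6⟩))⟩

def dirs : Finset (ℤ×ℤ) := {(0,1), (0,-1), (1,0), (-1,0)}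

lemma filter_quad (P : ℤ×ℤ → Prop) [DecidablePred P] :
    (dirs.filter P).card =
      (if P (0,1) then 1 else 0) + (if P (0,-1) then 1 else 0) +
      (if P (1,0) then 1 else 0) + (if P (-1,0) then 1 else 0) := by
  by_cases h1 : P (0,1) <;> by_cases h2 : P (0,-1) <;> by_cases h3 : P (1,0) <;>
    by_cases h4 : P (-1,0) <;>
    simp [dirs, Finset.filter_insert, Finset.filter_singleton, h1, h2, h3, h4,
      Finset.card_insert_of_notMem, Finset.mem_insert, Finset.mem_singleton] <;>
    decide

noncomputable def indeg (d : ℤ×ℤ) : ℕ := (dirs.filter fun δ => Dstep ω m n (d+δ) d).card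

noncomputable def outdeg (d : ℤ×ℤ) : ℕ := (dirs.filter fun δ => Dstep ω m n d (d+δ)).card

lemma addu (i j : ℤ) : ((i,j) : ℤ×ℤ) + (0,1) = (i, j+1) := by
  rw [Prod.mk_add_mk]; exact congrArg₂ Prod.mk (by omega) rfl

lemma addd (i j : ℤ) : ((i,j) : ℤ×ℤ) + (0,-1) = (i, j-1) := by
  rw [Prod.mk_add_mk]; exact congrArg₂ Prod.mk (by omega) (by omega)

lemma addr (i j : ℤ) : ((i,j) : ℤ×ℤ) + (1,0) = (i+1, j) := by
  rw [Prod.mk_add_mk]; exact congrArg₂ Prod.mk rfl (by omega)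

lemma addl (i j : ℤ) : ((i,j) : ℤ×ℤ) + (-1,0) = (i-1, j) := by
  rw [Prod.mk_add_mk]; exact congrArg₂ Prod.mk (by omega) (by omega)

end Perco

namespace Perco
open SimpleGraph

variable (ω : Sym2 (ℤ×ℤ) → Prop) (m n : ℤ)

lemma indeg_eval (i j : ℤ) : indeg ω m n (i,j) =
    (if Dstep ω m n (i,j+1) (i,j) then 1 else 0) +
    (if Dstep ω m n (i,j-1) (i,j) then 1 else 0) +
    (if Dstep ω m n (i+1,j) (i,j) then 1 else 0) +
    (if Dstep ω m n (i-1,j) (i,j) then 1 else 0) := by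
  rw [indeg, filter_quad, addu, addd, addr, addl]

lemma outdeg_eval (i j : ℤ) : outdeg ω m n (i,j) =
    (if Dstep ω m n (i,j) (i,j+1) then 1 else 0) +
    (if Dstep ω m n (i,j) (i,j-1) then 1 else 0) +
    (if Dstep ω m n (i,j) (i+1,j) then 1 else 0) +
    (if Dstep ω m n (i,j) (i-1,j) then 1 else 0) := by
  rw [outdeg, filter_quad, addu, addd, addr, addl]

lemma balance (hm : 2 ≤ m) (hright : ∀ x, Sset ω m n x → x.1 ≠ m)
    (i j : ℤ) (hi1 : 1 ≤ i) (hi2 : i ≤ m) (hj1 : 1 ≤ j) (hj2 : j ≤ n) :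
    indeg ω m n (i,j) = outdeg ω m n (i,j) := by
  have hj' : j - 1 + 1 = j := by omega
  have hi' : i - 1 + 1 = i := by omega
  have T2 := Dstep_up ω m n i (j-1); rw [hj'] at T2
  have T4 := Dstep_right ω m n (i-1) j; rw [hi'] at T4
  have U2 := Dstep_down ω m n i (j-1); rw [hj'] at U2
  have U4 := Dstep_left ω m n (i-1) j; rw [hi'] at U4
  rw [indeg_eval, outdeg_eval]
  rw [T2, T4, U2, U4, Dstep_down ω m n i j, Dstep_up ω m n i j, Dstep_left ω m n i j,
    Dstep_right ω m n i j]
  have hs00 : inStrip m n (i,j) := ⟨hi1, hi2, by omega, by omega⟩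
  have hsup : inStrip m n (i,j+1) := ⟨hi1, hi2, by omega, by omega⟩
  have hsdn : inStrip m n (i,j-1) := ⟨hi1, hi2, by omega, by omega⟩
  have hrB : inR m n (i,j) := ⟨by omega, by omega, by omega, by omega⟩
  have hrD : inR m n (i,j-1) := ⟨by omega, by omega, by omega, by omega⟩
  have hrA : inR m n (i-1,j) := ⟨by omega, by omega, by omega, by omega⟩
  have hrC : inR m n (i-1,j-1) := ⟨by omega, by omega, by omega, by omega⟩
  by_cases him : i = m
  · have hieq1 : ¬ (i = 1) := by omega
    have hb : ¬ Sset ω m n (i,j-1) := fun h => hright _ h him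
    have hc : ¬ Sset ω m n (i,j) := fun h => hright _ h him
    have hsR : ¬ inStrip m n (i+1,j) := fun h => by obtain ⟨-, h2, -⟩ := h; omega
    have hsL : inStrip m n (i-1,j) := ⟨by omega, by omega, by omega, by omega⟩
    by_cases hA : Sset ω m n (i-1,j-1) <;> by_cases hW : Sset ω m n (i-1,j) <;>
      simp [hs00, hsup, hsdn, hrA, hrB, hrC, hrD, hb, hc, hsR, hsL, hA, hW]
  · by_cases hi1' : i = 1
    · have ha : Sset ω m n (i-1,j-1) := Sset_left (by omega) ⟨by omega, by omega, by omega, by omega⟩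
      have hw : Sset ω m n (i-1,j) := Sset_left (by omega) ⟨by omega, by omega, by omega, by omega⟩
      have hsR : inStrip m n (i+1,j) := ⟨by omega, by omega, by omega, by omega⟩
      have hsL : ¬ inStrip m n (i-1,j) := fun h => by obtain ⟨h1, -⟩ := h; omega
      by_cases hB : Sset ω m n (i,j-1) <;> by_cases hC : Sset ω m n (i,j) <;>
        simp [hs00, hsup, hsdn, hrA, hrB, hrC, hrD, ha, hw, hsR, hsL, hB, hC]
    · have hsR : inStrip m n (i+1,j) := ⟨by omega, by omega, by omega, by omega⟩
      have hsL : inStrip m n (i-1,j) := ⟨by omega, by omega, by omega, by omega⟩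
      by_cases hA : Sset ω m n (i-1,j-1) <;> by_cases hB : Sset ω m n (i,j-1) <;>
        by_cases hC : Sset ω m n (i,j) <;> by_cases hW : Sset ω m n (i-1,j) <;>
        simp [hs00, hsup, hsdn, hrA, hrB, hrC, hrD, hsR, hsL, hA, hB, hC, hW]

lemma top_indeg (hn : 2 ≤ n) (i : ℤ) (hi1 : 1 ≤ i) (hi2 : i ≤ m) :
    indeg ω m n (i,n+1) =
      if (Sset ω m n (i-1,n) ∧ ¬ Sset ω m n (i,n)) then 1 else 0 := by
  have hj' : n + 1 - 1 = n := by omega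
  have hi' : i - 1 + 1 = i := by omega
  rw [indeg_eval, hj']
  have T2 := Dstep_up ω m n i n
  have T4 := Dstep_right ω m n (i-1) (n+1); rw [hi'] at T4
  rw [T2, T4, Dstep_down ω m n i (n+1), Dstep_left ω m n i (n+1)]
  have h1 : ¬ inStrip m n (i, n+1+1) := fun h => by obtain ⟨-, -, -, h4⟩ := h; omega
  have h2 : ¬ inR m n (i, n+1) := fun h => by obtain ⟨-, -, -, h4⟩ := h; omega
  have h3 : ¬ inR m n (i-1, n+1) := fun h => by obtain ⟨-, -, -, h4⟩ := h; omega
  have hs1 : inStrip m n (i,n) := ⟨hi1, hi2, by omega, by omega⟩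
  have hs2 : inStrip m n (i,n+1) := ⟨hi1, hi2, by omega, by omega⟩
  have hr1 : inR m n (i-1,n) := ⟨by omega, by omega, by omega, by omega⟩
  have hr2 : inR m n (i,n) := ⟨by omega, by omega, by omega, by omega⟩
  simp [h1, h2, h3, hs1, hs2, hr1, hr2]

lemma top_outdeg (hn : 2 ≤ n) (i : ℤ) (hi1 : 1 ≤ i) (hi2 : i ≤ m) :
    outdeg ω m n (i,n+1) =
      if (Sset ω m n (i,n) ∧ ¬ Sset ω m n (i-1,n)) then 1 else 0 := by
  have hj' : n + 1 - 1 = n := by omega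
  have hi' : i - 1 + 1 = i := by omega
  rw [outdeg_eval, hj']
  have U2 := Dstep_down ω m n i n
  have U4 := Dstep_left ω m n (i-1) (n+1); rw [hi'] at U4
  rw [U2, U4, Dstep_up ω m n i (n+1), Dstep_right ω m n i (n+1)]
  have h1 : ¬ inStrip m n (i, n+1+1) := fun h => by obtain ⟨-, -, -, h4⟩ := h; omega
  have h2 : ¬ inR m n (i, n+1) := fun h => by obtain ⟨-, -, -, h4⟩ := h; omega
  have h3 : ¬ inR m n (i-1, n+1) := fun h => by obtain ⟨-, -, -, h4⟩ := h; omega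
  have hs1 : inStrip m n (i,n) := ⟨hi1, hi2, by omega, by omega⟩
  have hs2 : inStrip m n (i,n+1) := ⟨hi1, hi2, by omega, by omega⟩
  have hr1 : inR m n (i-1,n) := ⟨by omega, by omega, by omega, by omega⟩
  have hr2 : inR m n (i,n) := ⟨by omega, by omega, by omega, by omega⟩
  simp [h1, h2, h3, hs1, hs2, hr1, hr2]

end Perco

namespace Perco
open SimpleGraph

variable (ω : Sym2 (ℤ×ℤ) → Prop) (m n : ℤ)

def Cset (d : ℤ×ℤ) : Prop :=
  ∃ t : ℤ×ℤ, t.2 = n+1 ∧ inStrip m n t ∧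
    Relation.ReflTransGen (fun x y => Dstep ω m n x y ∨ Dstep ω m n y x) t d

lemma Cset_closed {d d' : ℤ×ℤ} (h : Cset ω m n d)
    (hs : Dstep ω m n d d' ∨ Dstep ω m n d' d) : Cset ω m n d' := by
  obtain ⟨t, h1, h2, h3⟩ := h
  exact ⟨t, h1, h2, h3.tail hs⟩

lemma neg_mem_dirs {δ : ℤ×ℤ} (h : δ ∈ dirs) : -δ ∈ dirs := by
  fin_cases h <;> decide

lemma tele (F : ℤ → ℤ) : ∀ M : ℤ, 0 ≤ M →
    ∑ i ∈ Finset.Icc (1:ℤ) M, (F (i-1) - F i) = F 0 - F M := by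
  refine Int.le_induction ?_ ?_
  · rw [Finset.Icc_eq_empty (by omega)]; simp
  · intro M hM ih
    have hins : Finset.Icc (1:ℤ) (M+1) = insert (M+1) (Finset.Icc (1:ℤ) M) := by
      ext x; simp only [Finset.mem_Icc, Finset.mem_insert]; omega
    rw [hins, Finset.sum_insert (by simp only [Finset.mem_Icc]; omega), ih]
    have hM1 : M + 1 - 1 = M := by omega
    rw [hM1]; ring

lemma counting (hm : 2 ≤ m) (hn : 2 ≤ n) (hright : ∀ x, Sset ω m n x → x.1 ≠ m)
    (hnobot : ∀ d, Cset ω m n d → d.2 ≠ 0) : False := by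
  classical
  set stripF : Finset (ℤ×ℤ) := Finset.Icc (1:ℤ) m ×ˢ Finset.Icc (0:ℤ) (n+1) with hstripF
  have hmemS : ∀ d : ℤ×ℤ, d ∈ stripF ↔ inStrip m n d := by
    intro d
    simp only [hstripF, Finset.mem_product, Finset.mem_Icc, inStrip]
    tauto
  set Ein : Finset ((ℤ×ℤ)×(ℤ×ℤ)) :=
    (stripF ×ˢ dirs).filter (fun p => Cset ω m n p.1 ∧ Dstep ω m n (p.1+p.2) p.1) with hEin
  set Eout : Finset ((ℤ×ℤ)×(ℤ×ℤ)) :=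
    (stripF ×ˢ dirs).filter (fun p => Cset ω m n p.1 ∧ Dstep ω m n p.1 (p.1+p.2)) with hEout
  have hcard : Ein.card = Eout.card := by
    refine Finset.card_bij' (fun p _ => (p.1+p.2, -p.2)) (fun p _ => (p.1+p.2, -p.2))
      ?_ ?_ ?_ ?_
    · intro p hp
      rw [hEin, Finset.mem_filter, Finset.mem_product] at hp
      obtain ⟨⟨hp1, hp2⟩, hC, hD⟩ := hp
      rw [hEout, Finset.mem_filter, Finset.mem_product]
      refine ⟨⟨(hmemS _).2 (Dstep_strip₁ hD), neg_mem_dirs hp2⟩,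
        Cset_closed ω m n hC (Or.inr hD), ?_⟩
      rwa [add_neg_cancel_right]
    · intro p hp
      rw [hEout, Finset.mem_filter, Finset.mem_product] at hp
      obtain ⟨⟨hp1, hp2⟩, hC, hD⟩ := hp
      rw [hEin, Finset.mem_filter, Finset.mem_product]
      refine ⟨⟨(hmemS _).2 (Dstep_strip₂ hD), neg_mem_dirs hp2⟩,
        Cset_closed ω m n hC (Or.inl hD), ?_⟩
      rwa [add_neg_cancel_right]
    · intro p hp; simp [Prod.ext_iff, add_neg_cancel_right]
    · intro p hp; simp [Prod.ext_iff, add_neg_cancel_right]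
  have hin : Ein.card = ∑ d ∈ stripF, (if Cset ω m n d then indeg ω m n d else 0) := by
    rw [hEin, Finset.card_filter, Finset.sum_product]
    refine Finset.sum_congr rfl fun d hd => ?_
    by_cases hC : Cset ω m n d
    · simp only [hC, true_and, if_true]
      rw [indeg, Finset.card_filter]
    · simp [hC]
  have hout : Eout.card = ∑ d ∈ stripF, (if Cset ω m n d then outdeg ω m n d else 0) := by
    rw [hEout, Finset.card_filter, Finset.sum_product]
    refine Finset.sum_congr rfl fun d hd => ?_
    by_cases hC : Cset ω m n d
    · simp only [hC, true_and, if_true]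
      rw [outdeg, Finset.card_filter]
    · simp [hC]
  have hsum : ∑ d ∈ stripF, (((if Cset ω m n d then indeg ω m n d else 0 : ℕ) : ℤ)
      - ((if Cset ω m n d then outdeg ω m n d else 0 : ℕ) : ℤ)) = 0 := by
    rw [Finset.sum_sub_distrib]
    rw [← Nat.cast_sum, ← Nat.cast_sum, ← hin, ← hout, hcard]
    ring
  have hpoint : ∀ d ∈ stripF, (((if Cset ω m n d then indeg ω m n d else 0 : ℕ) : ℤ)
      - ((if Cset ω m n d then outdeg ω m n d else 0 : ℕ) : ℤ)) =
      (if d.2 = n+1 then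
        ((if Sset ω m n (d.1-1,n) ∧ ¬ Sset ω m n (d.1,n) then (1:ℤ) else 0)
          - (if Sset ω m n (d.1,n) ∧ ¬ Sset ω m n (d.1-1,n) then (1:ℤ) else 0)) else 0) := by
    rintro ⟨i, j⟩ hd
    have hdS : inStrip m n (i,j) := (hmemS _).1 hd
    obtain ⟨hd1, hd2, hd3, hd4⟩ := hdS
    simp only at hd1 hd2 hd3 hd4 ⊢
    by_cases htop : j = n + 1
    · subst htop
      have hC : Cset ω m n (i, n+1) := ⟨(i,n+1), rfl, ⟨hd1, hd2, by omega, by omega⟩,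
        Relation.ReflTransGen.refl⟩
      rw [if_pos hC, if_pos hC, if_pos rfl, top_indeg ω m n hn i hd1 hd2,
        top_outdeg ω m n hn i hd1 hd2]
      by_cases h1 : Sset ω m n (i-1,n) <;> by_cases h2 : Sset ω m n (i,n) <;>
        simp [h1, h2]
    · rw [if_neg htop]
      by_cases hbot : j = 0
      · have hC : ¬ Cset ω m n (i, j) := fun h => hnobot _ h hbot
        simp [hC]
      · have hbal := balance ω m n hm hright i j hd1 hd2 (by omega) (by omega)
        by_cases hC : Cset ω m n (i, j) <;> simp [hC, hbal]
  rw [Finset.sum_congr rfl hpoint] at hsum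
  rw [hstripF, Finset.sum_product] at hsum
  have hinner : ∀ i ∈ Finset.Icc (1:ℤ) m,
      (∑ j ∈ Finset.Icc (0:ℤ) (n+1), (if ((i,j) : ℤ×ℤ).2 = n+1 then
        ((if Sset ω m n (((i,j) : ℤ×ℤ).1-1,n) ∧ ¬ Sset ω m n (((i,j) : ℤ×ℤ).1,n) then (1:ℤ) else 0)
          - (if Sset ω m n (((i,j) : ℤ×ℤ).1,n) ∧ ¬ Sset ω m n (((i,j) : ℤ×ℤ).1-1,n) then (1:ℤ) else 0)) else 0)) =
      ((if Sset ω m n (i-1,n) then (1:ℤ) else 0) - (if Sset ω m n (i,n) then (1:ℤ) else 0)) := by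
    intro i hi
    simp only
    rw [Finset.sum_ite_eq' (Finset.Icc (0:ℤ) (n+1)) (n+1)]
    rw [if_pos (by simp only [Finset.mem_Icc]; omega)]
    by_cases h1 : Sset ω m n (i-1,n) <;> by_cases h2 : Sset ω m n (i,n) <;> simp [h1, h2]
  rw [Finset.sum_congr rfl hinner] at hsum
  rw [tele (fun i => if Sset ω m n (i,n) then (1:ℤ) else 0) m (by omega)] at hsum
  have hg0 : Sset ω m n ((0:ℤ),n) := Sset_left rfl ⟨le_refl 0, by omega, by omega, le_refl n⟩
  have hgm : ¬ Sset ω m n ((m:ℤ),n) := fun h => hright _ h rfl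
  rw [if_pos hg0, if_neg hgm] at hsum
  omega

end Perco

namespace Perco
open SimpleGraph

variable (ω : Sym2 (ℤ×ℤ) → Prop) (m n : ℤ)

lemma exists_LR (hS : ∃ x, Sset ω m n x ∧ x.1 = m) :
    ∃ (u v : ℤ × ℤ) (w : gridGraph.Walk u v), isLRCrossing m n w ∧ ∀ e ∈ w.edges, ω e := by
  obtain ⟨x, ⟨u, hu0, huR, hrtg⟩, hxm⟩ := hS
  obtain ⟨w, hsup, hedg⟩ := walk_of_rtg (openStep ω m n) (fun _ _ h => h.2.2.1) hrtg
  have hmin := exists_min_crossing (fun y => y.1 = 0) (fun y => y.1 = m) (inR m n) ω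
    ⟨u, x, w, hu0, hxm, ?_, ?_⟩
  · obtain ⟨u', v', w', hpath, hstart, hend, hins, hedge, htl, htr⟩ := hmin
    refine ⟨u', v', w', ⟨hpath, hstart, ?_, ?_, hend, ?_, ?_, hins, htl, htr⟩, hedge⟩
    · exact (hins u' w'.start_mem_support).2.2.1
    · exact (hins u' w'.start_mem_support).2.2.2
    · exact (hins v' w'.end_mem_support).2.2.1
    · exact (hins v' w'.end_mem_support).2.2.2
  · intro y hy
    rcases hsup y hy with rfl | ⟨z, hz⟩
    · exact huR
    · exact hz.2.1
  · intro e he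
    obtain ⟨x', y', hstep, rfl⟩ := hedg e he
    exact hstep.2.2.2

lemma exists_TB
    (ht : ∃ t d : ℤ×ℤ, t.2 = n+1 ∧ inStrip m n t ∧
      Relation.ReflTransGen (fun x y => Dstep ω m n x y ∨ Dstep ω m n y x) t d ∧ d.2 = 0) :
    ∃ (a b : ℤ × ℤ) (w : gridGraph.Walk a b), isTBDualCrossing m n w ∧
      ∀ f ∈ w.edges, dualClosed ω f := by
  obtain ⟨t, d, ht2, htS, hrtg, hd2⟩ := ht
  obtain ⟨w, hsup, hedg⟩ := walk_of_rtg _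
    (fun x y h => h.elim (fun h' => Dstep_adj h') (fun h' => (Dstep_adj h').symm)) hrtg
  have hmin := exists_min_crossing (fun y => y.2 = n+1) (fun y => y.2 = 0) (inStrip m n)
    (dualClosed ω) ⟨t, d, w, ht2, hd2, ?_, ?_⟩
  · obtain ⟨u', v', w', hpath, hstart, hend, hins, hedge, htl, htr⟩ := hmin
    have hu' := hins u' w'.start_mem_support
    have hv' := hins v' w'.end_mem_support
    refine ⟨u', v', w', ⟨hpath, hstart, hu'.1, hu'.2.1, hend, hv'.1, hv'.2.1, ?_⟩, hedge⟩
    intro y hy hyu hyv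
    have hyS := hins y hy
    refine ⟨hyS.1, hyS.2.1, ?_, ?_⟩
    · rcases lt_or_ge 0 y.2 with h | h
      · omega
      · exact absurd (htr y hy (by have := hyS.2.2.1; omega)) hyv
    · rcases lt_or_ge y.2 (n+1) with h | h
      · omega
      · exact absurd (htl y hy (by
          have := hyS.2.2.2
          omega)) hyu
  · intro y hy
    rcases hsup y hy with rfl | ⟨z, hz⟩
    · exact htS
    · exact hz.elim (fun h' => Dstep_strip₂ h') (fun h' => Dstep_strip₁ h')
  · intro e he
    obtain ⟨x', y', hstep, rfl⟩ := hedg e he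
    rcases hstep with h' | h'
    · exact Dstep_closed h'
    · rw [Sym2.eq_swap]
      exact Dstep_closed h'

end Perco


/-- In bond percolation on the `m × n` rectangle `R`, exactly one of the
following holds: `R` contains an open left-right crossing, or `R` contains a
closed dual top-bottom crossing. -/
theorem open_LR_xor_closed_dual_TB (m n : ℤ) (hm : 2 ≤ m) (hn : 2 ≤ n)
    (ω : Sym2 (ℤ × ℤ) → Prop) :
    Xor' (∃ (u v : ℤ × ℤ) (w : gridGraph.Walk u v), isLRCrossing m n w ∧
            ∀ e ∈ w.edges, ω e)
         (∃ (a b : ℤ × ℤ) (w : gridGraph.Walk a b), isTBDualCrossing m n w ∧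
            ∀ f ∈ w.edges, dualClosed ω f) := by
  classical
  by_cases hA : (∃ (u v : ℤ × ℤ) (w : gridGraph.Walk u v), isLRCrossing m n w ∧
      ∀ e ∈ w.edges, ω e)
  · left
    refine ⟨hA, ?_⟩
    rintro ⟨a, b, p, hTB, hcl⟩
    obtain ⟨u, v, w, hLR, hopen⟩ := hA
    exact Perco.part1 hn ω hLR hopen hTB hcl
  · right
    refine ⟨?_, hA⟩
    have hright : ∀ x, Perco.Sset ω m n x → x.1 ≠ m := by
      intro x hx hxm
      exact hA (Perco.exists_LR ω m n ⟨x, hx, hxm⟩)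
    by_cases hreach : ∃ t d : ℤ×ℤ, t.2 = n+1 ∧ Perco.inStrip m n t ∧
        Relation.ReflTransGen (fun x y => Perco.Dstep ω m n x y ∨ Perco.Dstep ω m n y x) t d ∧
        d.2 = 0
    · exact Perco.exists_TB ω m n hreach
    · exfalso
      apply Perco.counting ω m n hm hn hright
      intro d hd hd2
      obtain ⟨t, h1, h2, h3⟩ := hd
      exact hreach ⟨t, d, h1, h2, h3, hd2⟩
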